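/- Let L ≥ 1 and let θ = (W̃_1,…,W̃_L) and θ' = (W̃'_1,…,W̃'_L) be parameters of two ReLU networks with the same architecture (L, (N_0,…,N_L)) and with identical biases (the last columns of W̃_ℓ and W̃'_ℓ coincide for every ℓ). Assume that for every ℓ = 1,…,L one has ‖W̃_ℓ‖_{op,∞} ≤ r_ℓ and ‖W̃'_ℓ‖_{op,∞} ≤ r_ℓ, where r_ℓ > 0. Then for every D > 0, sup over x ∈ [−D,D]^{N_0} of ‖R_θ(x̃) − R_{θ'}(x̃)‖_∞ is at most max(D,1) · (Σ_{ℓ=1}^L N_{ℓ−1}) · M · ‖θ − θ'‖_∞, where M := max_{l=1,…,L} max_{i=1,…,max(l−1,1)} ∏_{j=i, j≠l}^{L} r_j (so that for l = 1 the inner maximum is the single product ∏_{j=2}^{L} r_j). -/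

import Mathlib

/-- The ℓ∞ operator norm of a real matrix: `sup_{‖x‖∞ = 1} ‖Ax‖∞`
(the norm on `n → ℝ` is the sup norm). -/
noncomputable def opNormInf {m n : Type*} [Fintype m] [Fintype n] (A : Matrix m n ℝ) : ℝ :=
  sSup ((fun x : n → ℝ => ‖A.mulVec x‖) '' {x | ‖x‖ = 1})

/-- Realization of a network with biases: layer `ℓ` (0-indexed) has augmented weight matrix
`W ℓ ∈ ℝ^{N (ℓ+1) × (N ℓ + 1)}` whose last column is the bias; the input of each layer is
augmented with a final coordinate equal to `1`, and the activation `σ` is applied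
componentwise. -/
noncomputable def realizeAug (σ : ℝ → ℝ) (N : ℕ → ℕ)
    (W : ∀ ℓ : ℕ, Matrix (Fin (N (ℓ + 1))) (Fin (N ℓ + 1)) ℝ) :
    (L : ℕ) → (Fin (N 0) → ℝ) → Fin (N L) → ℝ
  | 0, x => x
  | L + 1, x => fun i => σ ((W L).mulVec (Fin.snoc (realizeAug σ N W L x) 1) i)

/-- `‖θ - θ'‖∞`: the maximum over the first `L` layers and all entries of the absolute
entrywise difference of the parameters. -/
noncomputable def paramDistAug (N : ℕ → ℕ) (L : ℕ)
    (W W' : ∀ ℓ : ℕ, Matrix (Fin (N (ℓ + 1))) (Fin (N ℓ + 1)) ℝ) : ℝ :=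
  sSup {c : ℝ | ∃ ℓ < L, ∃ i j, c = |W ℓ i j - W' ℓ i j|}

/-! ### Auxiliary lemmas -/

lemma aux_norm_mulVec_le {m n : Type*} [Fintype m] [Fintype n] [Nonempty n]
    (A : Matrix m n ℝ) (v : n → ℝ) : ‖A.mulVec v‖ ≤ opNormInf A * ‖v‖ := by
  classical
  have hbdd : BddAbove ((fun x : n → ℝ => ‖A.mulVec x‖) '' {x | ‖x‖ = 1}) := by
    refine ⟨∑ i, ∑ j, |A i j|, ?_⟩
    rintro y ⟨z, hz, rfl⟩
    have hC : (0:ℝ) ≤ ∑ i, ∑ j, |A i j| :=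
      Finset.sum_nonneg fun i _ => Finset.sum_nonneg fun j _ => abs_nonneg _
    rw [pi_norm_le_iff_of_nonneg hC]
    intro i
    have h1 : ‖A.mulVec z i‖ ≤ ∑ j, |A i j| := by
      rw [Real.norm_eq_abs]
      simp only [Matrix.mulVec, dotProduct]
      refine (Finset.abs_sum_le_sum_abs _ _).trans ?_
      refine Finset.sum_le_sum fun j _ => ?_
      rw [abs_mul]
      have hzj : |z j| ≤ 1 := by
        have := norm_le_pi_norm z j
        rw [hz] at this; simpa using this
      calc |A i j| * |z j| ≤ |A i j| * 1 :=
            mul_le_mul_of_nonneg_left hzj (abs_nonneg _)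
        _ = |A i j| := mul_one _
    refine h1.trans ?_
    exact Finset.single_le_sum (f := fun i => ∑ j, |A i j|)
      (fun i _ => Finset.sum_nonneg fun j _ => abs_nonneg _) (Finset.mem_univ i)
  rcases eq_or_ne v 0 with rfl | hv
  · simp [Matrix.mulVec_zero]
  · have hv0 : 0 < ‖v‖ := norm_pos_iff.mpr hv
    have hu : ‖(‖v‖⁻¹ • v : n → ℝ)‖ = 1 := by
      rw [norm_smul, norm_inv, norm_norm]
      field_simp
    have key : ‖A.mulVec (‖v‖⁻¹ • v)‖ ≤ opNormInf A :=
      le_csSup hbdd ⟨_, hu, rfl⟩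
    rw [Matrix.mulVec_smul, norm_smul, norm_inv, norm_norm] at key
    calc ‖A.mulVec v‖ = (‖v‖⁻¹ * ‖A.mulVec v‖) * ‖v‖ := by field_simp
      _ ≤ opNormInf A * ‖v‖ := mul_le_mul_of_nonneg_right key hv0.le

lemma aux_norm_snoc_le {k : ℕ} (v : Fin k → ℝ) (a : ℝ) :
    ‖(Fin.snoc v a : Fin (k+1) → ℝ)‖ ≤ max ‖v‖ |a| := by
  rw [pi_norm_le_iff_of_nonneg (le_max_of_le_right (abs_nonneg a))]
  intro i
  refine Fin.lastCases ?_ ?_ i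
  · simp [Real.norm_eq_abs]
  · intro j
    simp only [Fin.snoc_castSucc]
    exact (norm_le_pi_norm v j).trans (le_max_left _ _)

lemma aux_snoc_sub {k : ℕ} (v w : Fin k → ℝ) (a b : ℝ) :
    (Fin.snoc v a : Fin (k+1) → ℝ) - Fin.snoc w b = Fin.snoc (v - w) (a - b) := by
  funext i
  refine Fin.lastCases ?_ ?_ i
  · simp
  · intro j; simp

lemma aux_prod_erase (r : ℕ → ℝ) {i l L : ℕ} (hil : i ≤ l) (hlL : l < L) :
    ∏ j ∈ (Finset.Ico i L).erase l, r j =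
      (∏ j ∈ Finset.Ico i l, r j) * ∏ j ∈ Finset.Ico (l+1) L, r j := by
  have hset : (Finset.Ico i L).erase l = Finset.Ico i l ∪ Finset.Ico (l+1) L := by
    ext j
    simp only [Finset.mem_erase, Finset.mem_Ico, Finset.mem_union]
    omega
  rw [hset, Finset.prod_union ?_]
  rw [Finset.disjoint_left]
  intro a ha hb
  simp only [Finset.mem_Ico] at ha hb
  omega

/-- for ReLU networks with identical biases and layerwise operator-norm bounds
`r ℓ > 0` (layer `ℓ+1` of the paper is indexed here by `ℓ ∈ {0,…,L-1}`), for every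
`x ∈ [-D,D]^{N 0}`,
`‖R_θ(x̃) - R_{θ'}(x̃)‖∞ ≤ max(D,1) · (Σ_{ℓ=1}^L N_{ℓ-1}) · M · ‖θ - θ'‖∞` where
`M = max_{l=1,…,L} max_{i=1,…,max(l-1,1)} ∏_{j=i, j≠l}^L r_j` (stated here with 0-based
indices: `l, i` range over `Finset.range L` and `Finset.range (max l 1)` and the product is
over `j ∈ [i, L-1] \ {l}`). -/
theorem statement0 (L : ℕ) (hL : 1 ≤ L) (N : ℕ → ℕ)
    (W W' : ∀ ℓ : ℕ, Matrix (Fin (N (ℓ + 1))) (Fin (N ℓ + 1)) ℝ)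
    (hbias : ∀ ℓ < L, ∀ i, W ℓ i (Fin.last (N ℓ)) = W' ℓ i (Fin.last (N ℓ)))
    (r : ℕ → ℝ) (hr : ∀ ℓ < L, 0 < r ℓ)
    (hW : ∀ ℓ < L, opNormInf (W ℓ) ≤ r ℓ)
    (hW' : ∀ ℓ < L, opNormInf (W' ℓ) ≤ r ℓ)
    (D : ℝ) (hD : 0 < D) (x : Fin (N 0) → ℝ) (hx : ∀ i, |x i| ≤ D) :
    ‖realizeAug (fun t => max 0 t) N W L x - realizeAug (fun t => max 0 t) N W' L x‖ ≤
      max D 1 * (∑ ℓ ∈ Finset.range L, (N ℓ : ℝ)) *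
        ((Finset.range L).sup' (Finset.nonempty_range_iff.mpr (by omega))
          (fun l => (Finset.range (max l 1)).sup' (Finset.nonempty_range_iff.mpr (by omega))
            (fun i => ∏ j ∈ (Finset.Icc i (L - 1)).erase l, r j))) *
        paramDistAug N L W W' := by
  classical
  set σ : ℝ → ℝ := fun t => max 0 t with hσ
  have hrelu : ∀ a b : ℝ, |σ a - σ b| ≤ |a - b| := by
    intro a b
    rw [hσ]
    simp only [max_comm (0:ℝ)]
    exact abs_max_sub_max_le_abs a b 0
  set maxD := max D 1 with hmaxD
  have hmaxD1 : (1:ℝ) ≤ maxD := le_max_right _ _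
  have hmaxD0 : (0:ℝ) ≤ maxD := zero_le_one.trans hmaxD1
  set ε := paramDistAug N L W W' with hεdef
  -- ε bounds
  have hSfin : ({c : ℝ | ∃ ℓ < L, ∃ i j, c = |W ℓ i j - W' ℓ i j|}).Finite := by
    have hset : {c : ℝ | ∃ ℓ < L, ∃ i j, c = |W ℓ i j - W' ℓ i j|} =
        ⋃ ℓ ∈ Set.Iio L, Set.range (fun p : Fin (N (ℓ+1)) × Fin (N ℓ + 1) =>
          |W ℓ p.1 p.2 - W' ℓ p.1 p.2|) := by
      ext c
      simp only [Set.mem_setOf_eq, Set.mem_iUnion, Set.mem_range, Set.mem_Iio, Prod.exists]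
      constructor
      · rintro ⟨ℓ, hℓ, i, j, rfl⟩; exact ⟨ℓ, hℓ, i, j, rfl⟩
      · rintro ⟨ℓ, hℓ, i, j, rfl⟩; exact ⟨ℓ, hℓ, i, j, rfl⟩
    rw [hset]
    exact Set.Finite.biUnion (Set.finite_Iio L) fun ℓ _ => Set.finite_range _
  have hε0 : 0 ≤ ε := Real.sSup_nonneg fun c hc => by
    obtain ⟨ℓ, _, i, j, rfl⟩ := hc; exact abs_nonneg _
  have hεB : ∀ ℓ, ℓ < L → ∀ i j, |W ℓ i j - W' ℓ i j| ≤ ε := fun ℓ hℓ i j =>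
    le_csSup hSfin.bddAbove ⟨ℓ, hℓ, i, j, rfl⟩
  -- partial products
  have hne : ∀ k : ℕ, (Finset.range (k+1)).Nonempty :=
    fun k => Finset.nonempty_range_iff.mpr (Nat.succ_ne_zero k)
  have hneS : ∀ l : ℕ, (Finset.range (max l 1)).Nonempty :=
    fun l => Finset.nonempty_range_iff.mpr (by omega)
  set P : ℕ → ℝ := fun ℓ =>
    (Finset.range (ℓ+1)).sup' (hne ℓ) (fun i => ∏ j ∈ Finset.Ico i ℓ, r j) with hP
  set S : ℕ → ℝ := fun l =>
    (Finset.range (max l 1)).sup' (hneS l) (fun i => ∏ j ∈ Finset.Ico i l, r j) with hSdef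
  have hP1 : ∀ ℓ, 1 ≤ P ℓ := by
    intro ℓ
    have h := Finset.le_sup' (fun i => ∏ j ∈ Finset.Ico i ℓ, r j)
      (Finset.self_mem_range_succ ℓ)
    simp only [Finset.Ico_self, Finset.prod_empty] at h
    exact h
  have hSP : ∀ l, S l ≤ P l := by
    intro l
    rw [hSdef, hP]
    apply Finset.sup'_le
    intro i hi
    have hi' : i ∈ Finset.range (l+1) := Finset.mem_range.mpr
      (by have := Finset.mem_range.mp hi; omega)
    exact Finset.le_sup' (fun i => ∏ j ∈ Finset.Ico i l, r j) hi'
  have hrP : ∀ ℓ, r ℓ * P ℓ ≤ S (ℓ+1) := by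
    intro ℓ
    obtain ⟨i₀, hi₀, hP0⟩ := Finset.exists_mem_eq_sup' (hne ℓ)
      (fun i => ∏ j ∈ Finset.Ico i ℓ, r j)
    have hi₀ℓ : i₀ ≤ ℓ := by have := Finset.mem_range.mp hi₀; omega
    have h1 : r ℓ * P ℓ = ∏ j ∈ Finset.Ico i₀ (ℓ+1), r j := by
      rw [hP]
      simp only
      rw [hP0, Finset.prod_Ico_succ_top hi₀ℓ]
      ring
    rw [h1, hSdef]
    simp only
    have hmem : i₀ ∈ Finset.range (max (ℓ+1) 1) := Finset.mem_range.mpr (by omega)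
    exact Finset.le_sup' (fun i => ∏ j ∈ Finset.Ico i (ℓ+1), r j) hmem
  -- growth claim
  have hgrow : ∀ ℓ, ℓ ≤ L →
      ‖realizeAug σ N W' ℓ x‖ ≤ maxD * S ℓ ∧
        max ‖realizeAug σ N W' ℓ x‖ 1 ≤ maxD * P ℓ := by
    intro ℓ
    induction ℓ with
    | zero =>
      intro _
      have hx' : ‖x‖ ≤ D := (pi_norm_le_iff_of_nonneg hD.le).mpr
        (fun i => by simpa [Real.norm_eq_abs] using hx i)
      have hy0 : realizeAug σ N W' 0 x = x := rfl
      have hS0 : S 0 = 1 := by simp [hSdef]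
      have hP0 : P 0 = 1 := by simp [hP]
      constructor
      · rw [hy0, hS0, mul_one]; exact hx'.trans (le_max_left _ _)
      · rw [hy0, hP0, mul_one]
        exact max_le (hx'.trans (le_max_left _ _)) hmaxD1
    | succ ℓ ih =>
      intro hℓ1
      have hℓ : ℓ < L := hℓ1
      obtain ⟨_, ihP⟩ := ih hℓ.le
      have hnorm : ‖realizeAug σ N W' (ℓ+1) x‖ ≤ r ℓ * (maxD * P ℓ) := by
        have hbig : ‖(W' ℓ).mulVec (Fin.snoc (realizeAug σ N W' ℓ x) 1)‖
            ≤ r ℓ * (maxD * P ℓ) := by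
          refine (aux_norm_mulVec_le _ _).trans ?_
          refine mul_le_mul (hW' ℓ hℓ) ?_ (norm_nonneg _) (hr ℓ hℓ).le
          refine (aux_norm_snoc_le _ _).trans ?_
          calc max ‖realizeAug σ N W' ℓ x‖ |(1:ℝ)|
              = max ‖realizeAug σ N W' ℓ x‖ 1 := by norm_num
            _ ≤ maxD * P ℓ := ihP
        rw [pi_norm_le_iff_of_nonneg ((norm_nonneg _).trans hbig)]
        intro i
        have heq : realizeAug σ N W' (ℓ+1) x i
            = σ ((W' ℓ).mulVec (Fin.snoc (realizeAug σ N W' ℓ x) 1) i) := rfl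
        have h2 : |σ ((W' ℓ).mulVec (Fin.snoc (realizeAug σ N W' ℓ x) 1) i)|
            ≤ |(W' ℓ).mulVec (Fin.snoc (realizeAug σ N W' ℓ x) 1) i| := by
          have := hrelu ((W' ℓ).mulVec (Fin.snoc (realizeAug σ N W' ℓ x) 1) i) 0
          simpa [hσ] using this
        have h3 : |(W' ℓ).mulVec (Fin.snoc (realizeAug σ N W' ℓ x) 1) i|
            ≤ ‖(W' ℓ).mulVec (Fin.snoc (realizeAug σ N W' ℓ x) 1)‖ := by
          simpa [Real.norm_eq_abs] using
            norm_le_pi_norm ((W' ℓ).mulVec (Fin.snoc (realizeAug σ N W' ℓ x) 1)) i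
        rw [heq, Real.norm_eq_abs]
        exact (h2.trans h3).trans hbig
      constructor
      · refine hnorm.trans ?_
        calc r ℓ * (maxD * P ℓ) = maxD * (r ℓ * P ℓ) := by ring
          _ ≤ maxD * S (ℓ+1) := mul_le_mul_of_nonneg_left (hrP ℓ) hmaxD0
      · apply max_le
        · refine hnorm.trans ?_
          calc r ℓ * (maxD * P ℓ) = maxD * (r ℓ * P ℓ) := by ring
            _ ≤ maxD * S (ℓ+1) := mul_le_mul_of_nonneg_left (hrP ℓ) hmaxD0
            _ ≤ maxD * P (ℓ+1) := mul_le_mul_of_nonneg_left (hSP _) hmaxD0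
        · calc (1:ℝ) = 1 * 1 := by ring
            _ ≤ maxD * P (ℓ+1) := mul_le_mul hmaxD1 (hP1 _) zero_le_one hmaxD0
  -- difference claim
  have hdiff : ∀ ℓ, ℓ ≤ L →
      ‖realizeAug σ N W ℓ x - realizeAug σ N W' ℓ x‖ ≤
        ε * maxD * ∑ l ∈ Finset.range ℓ,
          (N l : ℝ) * ((∏ j ∈ Finset.Ico (l+1) ℓ, r j) * S l) := by
    intro ℓ
    induction ℓ with
    | zero =>
      intro _
      have : realizeAug σ N W 0 x - realizeAug σ N W' 0 x = 0 := by
        funext i; simp [realizeAug]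
      rw [this]
      simp
    | succ ℓ ih =>
      intro hℓ1
      have hℓ : ℓ < L := hℓ1
      have ihd := ih hℓ.le
      set u := realizeAug σ N W ℓ x with hu
      set u' := realizeAug σ N W' ℓ x with hu'
      have hu'S : ‖u'‖ ≤ maxD * S ℓ := (hgrow ℓ hℓ.le).1
      have hpt : ∀ i, ‖(realizeAug σ N W (ℓ+1) x - realizeAug σ N W' (ℓ+1) x) i‖ ≤
          r ℓ * ‖u - u'‖ + (N ℓ : ℝ) * (ε * ‖u'‖) := by
        intro i
        have hab : (realizeAug σ N W (ℓ+1) x - realizeAug σ N W' (ℓ+1) x) i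
            = σ ((W ℓ).mulVec (Fin.snoc u 1) i)
              - σ ((W' ℓ).mulVec (Fin.snoc u' 1) i) := rfl
        rw [hab, Real.norm_eq_abs]
        refine (hrelu _ _).trans ?_
        have e1 : (W ℓ).mulVec (Fin.snoc u 1) i - (W ℓ).mulVec (Fin.snoc u' 1) i
            = (W ℓ).mulVec (Fin.snoc (u - u') 0) i := by
          have : (Fin.snoc (u - u') (0:ℝ) : Fin (N ℓ + 1) → ℝ)
              = Fin.snoc u 1 - Fin.snoc u' 1 := by
            rw [aux_snoc_sub]; norm_num
          rw [this, Matrix.mulVec_sub, Pi.sub_apply]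
        have e2 : (W ℓ).mulVec (Fin.snoc u' 1) i - (W' ℓ).mulVec (Fin.snoc u' 1) i
            = ∑ j : Fin (N ℓ), (W ℓ i j.castSucc - W' ℓ i j.castSucc) * u' j := by
          simp only [Matrix.mulVec, dotProduct]
          rw [← Finset.sum_sub_distrib, Fin.sum_univ_castSucc]
          simp [Fin.snoc_castSucc, Fin.snoc_last, hbias ℓ hℓ i, sub_mul]
        have hsplit : (W ℓ).mulVec (Fin.snoc u 1) i - (W' ℓ).mulVec (Fin.snoc u' 1) i
            = (W ℓ).mulVec (Fin.snoc (u - u') 0) i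
              + ∑ j : Fin (N ℓ), (W ℓ i j.castSucc - W' ℓ i j.castSucc) * u' j := by
          rw [← e1, ← e2]; ring
        rw [hsplit]
        refine (abs_add_le _ _).trans (add_le_add ?_ ?_)
        · have h1 : |(W ℓ).mulVec (Fin.snoc (u - u') 0) i|
              ≤ ‖(W ℓ).mulVec (Fin.snoc (u - u') 0)‖ := by
            have := norm_le_pi_norm ((W ℓ).mulVec (Fin.snoc (u - u') 0)) i
            simpa [Real.norm_eq_abs] using this
          refine h1.trans ?_
          refine (aux_norm_mulVec_le _ _).trans ?_
          refine mul_le_mul (hW ℓ hℓ) ?_ (norm_nonneg _) (hr ℓ hℓ).le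
          refine (aux_norm_snoc_le _ _).trans ?_
          simp [max_eq_left (norm_nonneg (u - u'))]
        · refine (Finset.abs_sum_le_sum_abs _ _).trans ?_
          have hterm : ∀ j : Fin (N ℓ),
              |(W ℓ i j.castSucc - W' ℓ i j.castSucc) * u' j| ≤ ε * ‖u'‖ := by
            intro j
            rw [abs_mul]
            refine mul_le_mul (hεB ℓ hℓ i j.castSucc) ?_ (abs_nonneg _) hε0
            have := norm_le_pi_norm u' j
            simpa [Real.norm_eq_abs] using this
          calc ∑ j : Fin (N ℓ), |(W ℓ i j.castSucc - W' ℓ i j.castSucc) * u' j|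
              ≤ ∑ _j : Fin (N ℓ), ε * ‖u'‖ :=
                Finset.sum_le_sum fun j _ => hterm j
            _ = (N ℓ : ℝ) * (ε * ‖u'‖) := by
                simp [Finset.sum_const, nsmul_eq_mul]
      have hRHS0 : 0 ≤ r ℓ * ‖u - u'‖ + (N ℓ : ℝ) * (ε * ‖u'‖) := by
        have := (hr ℓ hℓ).le
        positivity
      have hd := (pi_norm_le_iff_of_nonneg hRHS0).mpr hpt
      have hsum : ∑ l ∈ Finset.range (ℓ+1),
            (N l : ℝ) * ((∏ j ∈ Finset.Ico (l+1) (ℓ+1), r j) * S l)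
          = r ℓ * ∑ l ∈ Finset.range ℓ,
              (N l : ℝ) * ((∏ j ∈ Finset.Ico (l+1) ℓ, r j) * S l)
            + (N ℓ : ℝ) * S ℓ := by
        rw [Finset.sum_range_succ, Finset.mul_sum]
        congr 1
        · refine Finset.sum_congr rfl fun l hl => ?_
          rw [Finset.prod_Ico_succ_top (Nat.succ_le_of_lt (Finset.mem_range.mp hl))]
          ring
        · simp [Finset.Ico_self]
      calc ‖realizeAug σ N W (ℓ+1) x - realizeAug σ N W' (ℓ+1) x‖
          ≤ r ℓ * ‖u - u'‖ + (N ℓ : ℝ) * (ε * ‖u'‖) := hd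
        _ ≤ r ℓ * (ε * maxD * ∑ l ∈ Finset.range ℓ,
              (N l : ℝ) * ((∏ j ∈ Finset.Ico (l+1) ℓ, r j) * S l))
            + (N ℓ : ℝ) * (ε * (maxD * S ℓ)) := by
            refine add_le_add (mul_le_mul_of_nonneg_left ihd (hr ℓ hℓ).le) ?_
            refine mul_le_mul_of_nonneg_left ?_ (Nat.cast_nonneg _)
            exact mul_le_mul_of_nonneg_left hu'S hε0
        _ = ε * maxD * ∑ l ∈ Finset.range (ℓ+1),
              (N l : ℝ) * ((∏ j ∈ Finset.Ico (l+1) (ℓ+1), r j) * S l) := by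
            rw [hsum]; ring
  -- conclusion
  have hfinal := hdiff L le_rfl
  have hTM : ∀ l ∈ Finset.range L, (∏ j ∈ Finset.Ico (l+1) L, r j) * S l ≤
      (Finset.range L).sup' (Finset.nonempty_range_iff.mpr (by omega))
        (fun l => (Finset.range (max l 1)).sup' (Finset.nonempty_range_iff.mpr (by omega))
          (fun i => ∏ j ∈ (Finset.Icc i (L - 1)).erase l, r j)) := by
    intro l hl
    have hlL : l < L := Finset.mem_range.mp hl
    obtain ⟨i₀, hi₀, hS0⟩ := Finset.exists_mem_eq_sup' (hneS l)
      (fun i => ∏ j ∈ Finset.Ico i l, r j)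
    have hi₀l : i₀ ≤ l := by have := Finset.mem_range.mp hi₀; omega
    have hIccIco : Finset.Icc i₀ (L-1) = Finset.Ico i₀ L := by
      rw [← Finset.Ico_add_one_right_eq_Icc]
      congr 1
      omega
    have key : (∏ j ∈ Finset.Ico (l+1) L, r j) * S l
        = ∏ j ∈ (Finset.Icc i₀ (L-1)).erase l, r j := by
      rw [hIccIco, aux_prod_erase r hi₀l hlL]
      have hSl : S l = ∏ j ∈ Finset.Ico i₀ l, r j := by rw [hSdef]; exact hS0
      rw [hSl]; ring
    rw [key]
    have h1 : (∏ j ∈ (Finset.Icc i₀ (L-1)).erase l, r j) ≤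
        (Finset.range (max l 1)).sup' (hneS l)
          (fun i => ∏ j ∈ (Finset.Icc i (L - 1)).erase l, r j) :=
      Finset.le_sup' (fun i => ∏ j ∈ (Finset.Icc i (L - 1)).erase l, r j) hi₀
    refine h1.trans ?_
    exact Finset.le_sup'
      (fun l => (Finset.range (max l 1)).sup' (Finset.nonempty_range_iff.mpr (by omega))
        (fun i => ∏ j ∈ (Finset.Icc i (L - 1)).erase l, r j)) hl
  have hsum_le : ∑ l ∈ Finset.range L, (N l : ℝ) * ((∏ j ∈ Finset.Ico (l+1) L, r j) * S l)
      ≤ (∑ l ∈ Finset.range L, (N l : ℝ)) *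
        ((Finset.range L).sup' (Finset.nonempty_range_iff.mpr (by omega))
          (fun l => (Finset.range (max l 1)).sup' (Finset.nonempty_range_iff.mpr (by omega))
            (fun i => ∏ j ∈ (Finset.Icc i (L - 1)).erase l, r j))) := by
    rw [Finset.sum_mul]
    exact Finset.sum_le_sum fun l hl =>
      mul_le_mul_of_nonneg_left (hTM l hl) (Nat.cast_nonneg _)
  calc ‖realizeAug σ N W L x - realizeAug σ N W' L x‖
      ≤ ε * maxD * ∑ l ∈ Finset.range L,
          (N l : ℝ) * ((∏ j ∈ Finset.Ico (l+1) L, r j) * S l) := hfinal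
    _ ≤ ε * maxD * ((∑ l ∈ Finset.range L, (N l : ℝ)) *
        ((Finset.range L).sup' (Finset.nonempty_range_iff.mpr (by omega))
          (fun l => (Finset.range (max l 1)).sup' (Finset.nonempty_range_iff.mpr (by omega))
            (fun i => ∏ j ∈ (Finset.Icc i (L - 1)).erase l, r j)))) := by
        refine mul_le_mul_of_nonneg_left hsum_le ?_
        positivity
    _ = maxD * (∑ ℓ ∈ Finset.range L, (N ℓ : ℝ)) *
        ((Finset.range L).sup' (Finset.nonempty_range_iff.mpr (by omega))
          (fun l => (Finset.range (max l 1)).sup' (Finset.nonempty_range_iff.mpr (by omega))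
            (fun i => ∏ j ∈ (Finset.Icc i (L - 1)).erase l, r j))) * ε := by
        ring
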